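/- arXiv:2210.08204 — 2 statements merged into one kernel-verified Lean document; each statement's English description precedes it below -/
import Mathlib

section
/- If D : ℝ^N → ℝ^N is a contraction with constant δ ∈ [0,1), Φ ∈ ℝ^{M×N}, y ∈ ℝ^M, and 0 < γ ≤ 2/σ_max(ΦᵀΦ), then the map S(x) = D(x - γΦᵀ(Φx - y)) is a contraction with constant at most δ. -/
open Matrix

/-- The largest singular value of a real matrix, i.e. the operator norm of the
induced linear map between Euclidean spaces. -/
noncomputable def sigmaMax {M N : ℕ} (A : Matrix (Fin M) (Fin N) ℝ) : ℝ :=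
  ‖LinearMap.toContinuousLinearMap (Matrix.toEuclideanLin A)‖

lemma sigmaMax_key {M N : ℕ} (Φ : Matrix (Fin M) (Fin N) ℝ)
    (γ : ℝ) (hγ0 : 0 < γ) (hγ : γ ≤ 2 / sigmaMax (Φᵀ * Φ))
    (w : EuclideanSpace ℝ (Fin N)) :
    ‖w - γ • Matrix.toEuclideanLin Φᵀ (Matrix.toEuclideanLin Φ w)‖ ≤ ‖w‖ := by
  set T : EuclideanSpace ℝ (Fin N) →L[ℝ] EuclideanSpace ℝ (Fin M) :=
    LinearMap.toContinuousLinearMap (Matrix.toEuclideanLin Φ) with hT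
  have hadj : Matrix.toEuclideanLin Φᵀ = LinearMap.adjoint (Matrix.toEuclideanLin Φ) := by
    rw [← Matrix.conjTranspose_eq_transpose_of_trivial,
      Matrix.toEuclideanLin_conjTranspose_eq_adjoint]
  have hTapp : ∀ v, Matrix.toEuclideanLin Φᵀ (T v) = ContinuousLinearMap.adjoint T (T v) := by
    intro v
    rw [hadj, hT]
    rw [LinearMap.adjoint_eq_toCLM_adjoint]
    rfl
  have hcomp : Matrix.toEuclideanLin (Φᵀ * Φ) =
      (Matrix.toEuclideanLin Φᵀ) ∘ₗ (Matrix.toEuclideanLin Φ) := by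
    ext x
    simp [Matrix.toEuclideanLin_apply, Matrix.mulVec_mulVec]
  have hs : sigmaMax (Φᵀ * Φ) = ‖T‖ * ‖T‖ := by
    rw [← ContinuousLinearMap.norm_adjoint_comp_self T]
    unfold sigmaMax
    congr 1
    apply ContinuousLinearMap.coe_injective
    rw [LinearMap.coe_toContinuousLinearMap, hcomp, hadj, hT,
      LinearMap.adjoint_eq_toCLM_adjoint]
    rfl
  set s := ‖T‖ * ‖T‖ with hs'
  have hs0 : 0 ≤ s := mul_nonneg (norm_nonneg _) (norm_nonneg _)
  -- inner product expansion
  have hinner : (inner ℝ w (Matrix.toEuclideanLin Φᵀ (Matrix.toEuclideanLin Φ w)) : ℝ)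
      = ‖T w‖ ^ 2 := by
    have : Matrix.toEuclideanLin Φ w = T w := rfl
    rw [this, hTapp, ContinuousLinearMap.adjoint_inner_right, real_inner_self_eq_norm_sq]
  have hnormu : ‖Matrix.toEuclideanLin Φᵀ (Matrix.toEuclideanLin Φ w)‖ ≤ ‖T‖ * ‖T w‖ := by
    have : Matrix.toEuclideanLin Φ w = T w := rfl
    rw [this, hTapp]
    calc ‖ContinuousLinearMap.adjoint T (T w)‖ ≤ ‖ContinuousLinearMap.adjoint T‖ * ‖T w‖ :=
          ContinuousLinearMap.le_opNorm _ _
      _ = ‖T‖ * ‖T w‖ := by rw [LinearIsometryEquiv.norm_map]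
  set u := Matrix.toEuclideanLin Φᵀ (Matrix.toEuclideanLin Φ w) with hu
  -- key scalar inequality: γ * s ≤ 2 (when needed, i.e. when T w ≠ 0)
  have hγs : γ * s ≤ 2 ∨ T w = 0 := by
    by_cases h : s = 0
    · right
      have : ‖T‖ = 0 := by
        rcases mul_self_eq_zero.mp (hs' ▸ h) with h'
        exact h'
      have : T = 0 := norm_eq_zero.mp this
      simp [this]
    · left
      have hspos : 0 < s := lt_of_le_of_ne hs0 (Ne.symm h)
      have := (le_div_iff₀ hspos).mp (hs ▸ hγ)
      linarith
  have expand : ‖w - γ • u‖ ^ 2 = ‖w‖ ^ 2 - 2 * γ * ‖T w‖ ^ 2 + γ ^ 2 * ‖u‖ ^ 2 := by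
    rw [norm_sub_sq_real, inner_smul_right, norm_smul, hinner]
    rw [mul_pow, Real.norm_eq_abs, sq_abs]
    ring
  have hle : ‖w - γ • u‖ ^ 2 ≤ ‖w‖ ^ 2 := by
    rw [expand]
    rcases hγs with h2 | h0
    · have h1 : γ ^ 2 * ‖u‖ ^ 2 ≤ γ ^ 2 * (‖T‖ * ‖T w‖) ^ 2 := by
        apply mul_le_mul_of_nonneg_left _ (sq_nonneg γ)
        exact pow_le_pow_left₀ (norm_nonneg _) hnormu 2
      have h3 : γ ^ 2 * (‖T‖ * ‖T w‖) ^ 2 ≤ 2 * γ * ‖T w‖ ^ 2 := by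
        have : γ ^ 2 * (‖T‖ * ‖T w‖) ^ 2 = (γ * s) * (γ * ‖T w‖ ^ 2) := by
          rw [hs']; ring
        rw [this]
        have hg2 : 0 ≤ γ * ‖T w‖ ^ 2 := mul_nonneg hγ0.le (sq_nonneg _)
        calc (γ * s) * (γ * ‖T w‖ ^ 2) ≤ 2 * (γ * ‖T w‖ ^ 2) :=
              mul_le_mul_of_nonneg_right h2 hg2
          _ = 2 * γ * ‖T w‖ ^ 2 := by ring
      linarith
    · have hu0 : u = 0 := by
        rw [hu, show Matrix.toEuclideanLin Φ w = T w from rfl, h0]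
        simp
      simp [hu0, h0]
  have h := Real.sqrt_le_sqrt hle
  rwa [Real.sqrt_sq (norm_nonneg _), Real.sqrt_sq (norm_nonneg _)] at h

/-- If `D` is a `δ`-contraction with `δ ∈ [0,1)` and `0 < γ ≤ 2/σ_max(ΦᵀΦ)`, then
`S(x) = D(x - γ Φᵀ(Φx - y))` is a contraction with constant at most `δ`. -/
theorem stmt0 {M N : ℕ} (D : EuclideanSpace ℝ (Fin N) → EuclideanSpace ℝ (Fin N))
    (δ : ℝ) (hδ0 : 0 ≤ δ) (hδ1 : δ < 1)
    (hD : ∀ z₁ z₂ : EuclideanSpace ℝ (Fin N), ‖D z₁ - D z₂‖ ≤ δ * ‖z₁ - z₂‖)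
    (Φ : Matrix (Fin M) (Fin N) ℝ) (y : EuclideanSpace ℝ (Fin M))
    (γ : ℝ) (hγ0 : 0 < γ) (hγ : γ ≤ 2 / sigmaMax (Φᵀ * Φ)) :
    ∀ z₁ z₂ : EuclideanSpace ℝ (Fin N),
      ‖D (z₁ - γ • Matrix.toEuclideanLin Φᵀ (Matrix.toEuclideanLin Φ z₁ - y)) -
        D (z₂ - γ • Matrix.toEuclideanLin Φᵀ (Matrix.toEuclideanLin Φ z₂ - y))‖ ≤
        δ * ‖z₁ - z₂‖ := by
  intro z₁ z₂
  refine (hD _ _).trans (mul_le_mul_of_nonneg_left ?_ hδ0)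
  have harg : (z₁ - γ • Matrix.toEuclideanLin Φᵀ (Matrix.toEuclideanLin Φ z₁ - y)) -
      (z₂ - γ • Matrix.toEuclideanLin Φᵀ (Matrix.toEuclideanLin Φ z₂ - y)) =
      (z₁ - z₂) - γ • Matrix.toEuclideanLin Φᵀ (Matrix.toEuclideanLin Φ (z₁ - z₂)) := by
    simp only [map_sub, smul_sub]
    abel
  rw [harg]
  exact sigmaMax_key Φ γ hγ0 hγ (z₁ - z₂)
end

section
/- Let C₁,...,C_K be symmetric P×P PSD matrices each with λ_max(Cⱼ) < 1, let b_{ji} ≥ 0 satisfy Σⱼ b_{ji} = 1 for each i = 1,...,N, let P_i be circular patch extraction operators, and define W = (1/P) Σ_{i=1}^N P_iᵀ (Σⱼ b_{ji} Cⱼ) P_i. Then W is symmetric positive semidefinite and λ_max(W) < 1; consequently z ↦ Wz is a contraction on ℝ^N. -/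
open Matrix

/-- The matrix of the circular patch-extraction operator `P_i : ℝ^N → ℝ^P`,
`(P_i z)_j = z_{(i+j) mod N}`. -/
def patchMatrix (P N : ℕ) (i : Fin N) : Matrix (Fin P) (Fin N) ℝ :=
  fun j k => if k.1 = (i.1 + j.1) % N then 1 else 0

private lemma sum_mulVec' {ι n m : Type*} [Fintype ι] [Fintype n]
    (M : ι → Matrix m n ℝ) (x : n → ℝ) :
    (∑ j, M j) *ᵥ x = ∑ j, M j *ᵥ x := by
  ext k
  simp only [Matrix.mulVec, dotProduct, Matrix.sum_apply, Finset.sum_apply,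
    Finset.sum_mul]
  rw [Finset.sum_comm]

private lemma dotProduct_sum' {ι n : Type*} [Fintype ι] [Fintype n]
    (x : n → ℝ) (w : ι → n → ℝ) :
    x ⬝ᵥ (∑ j, w j) = ∑ j, x ⬝ᵥ w j := by
  simp only [dotProduct, Finset.sum_apply, Finset.mul_sum]
  exact Finset.sum_comm

/-- If all eigenvalues of a hermitian real matrix are at most `c`, then `c•1 - A` is PSD. -/
private lemma psd_smul_one_sub {n : Type*} [Fintype n] [DecidableEq n]
    {A : Matrix n n ℝ} (hA : A.IsHermitian) {c : ℝ}
    (h : ∀ i, hA.eigenvalues i ≤ c) :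
    (c • (1 : Matrix n n ℝ) - A).PosSemidef := by
  have hU : (hA.eigenvectorUnitary : Matrix n n ℝ) *
      (star (hA.eigenvectorUnitary : Matrix n n ℝ)) = 1 :=
    (Matrix.mem_unitaryGroup_iff).mp hA.eigenvectorUnitary.2
  have hd : diagonal (fun i => c - hA.eigenvalues i) =
      c • (1 : Matrix n n ℝ) - diagonal (RCLike.ofReal ∘ hA.eigenvalues) := by
    ext i k
    rcases eq_or_ne i k with rfl | h
    · simp [Matrix.one_apply_eq]
    · simp [Matrix.diagonal_apply_ne _ h, Matrix.one_apply_ne h]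
  have key : c • (1 : Matrix n n ℝ) - A =
      (hA.eigenvectorUnitary : Matrix n n ℝ) *
        diagonal (fun i => c - hA.eigenvalues i) *
        (star (hA.eigenvectorUnitary : Matrix n n ℝ)) := by
    rw [hd, Matrix.mul_sub, Matrix.sub_mul, Matrix.mul_smul, Matrix.mul_one,
      Matrix.smul_mul, hU]
    conv_lhs => rw [hA.spectral_theorem, Unitary.conjStarAlgAut_apply]
  rw [key]
  have hdiag : (diagonal (fun i => c - hA.eigenvalues i)).PosSemidef :=
    Matrix.posSemidef_diagonal_iff.mpr fun i => sub_nonneg.mpr (h i)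
  simpa [Matrix.star_eq_conjTranspose] using
    hdiag.mul_mul_conjTranspose_same (hA.eigenvectorUnitary : Matrix n n ℝ)

/-- Quadratic-form bound from PSD-ness of `c•1 - A`. -/
private lemma quad_le_of_psd {n : Type*} [Fintype n] [DecidableEq n]
    {A : Matrix n n ℝ} {c : ℝ}
    (h : (c • (1 : Matrix n n ℝ) - A).PosSemidef) (x : n → ℝ) :
    x ⬝ᵥ A *ᵥ x ≤ c * (x ⬝ᵥ x) := by
  have h2 := h.dotProduct_mulVec_nonneg x
  simp only [star_trivial, Matrix.sub_mulVec, Matrix.smul_mulVec, Matrix.one_mulVec,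
    dotProduct_sub, dotProduct_smul, smul_eq_mul] at h2
  linarith

/-- Let `C₁,...,C_K` be symmetric PSD matrices with all eigenvalues `< 1`, let
`b_{ji} ≥ 0` with `Σⱼ b_{ji} = 1` for each `i`, and let
`W = (1/P) Σᵢ Pᵢᵀ (Σⱼ b_{ji} Cⱼ) Pᵢ` with circular patch extraction operators `Pᵢ`.
Then `W` is symmetric PSD with every eigenvalue `< 1`; consequently `z ↦ Wz`
is a contraction on `ℝ^N` (with the Euclidean norm). -/
theorem stmt8 {P N K : ℕ} (hP : 0 < P) (hPN : P ∣ N)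
    (C : Fin K → Matrix (Fin P) (Fin P) ℝ)
    (hC : ∀ j, (C j).PosSemidef)
    (hEig : ∀ j (μ : ℝ) (v : Fin P → ℝ), v ≠ 0 → (C j).mulVec v = μ • v → μ < 1)
    (b : Fin K → Fin N → ℝ) (hb : ∀ j i, 0 ≤ b j i) (hb1 : ∀ i, ∑ j, b j i = 1) :
    let W : Matrix (Fin N) (Fin N) ℝ :=
      (P : ℝ)⁻¹ • ∑ i, (patchMatrix P N i)ᵀ * (∑ j, b j i • C j) * patchMatrix P N i
    W.PosSemidef ∧
      (∀ (μ : ℝ) (v : Fin N → ℝ), v ≠ 0 → W.mulVec v = μ • v → μ < 1) ∧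
      ∃ δ : ℝ, δ < 1 ∧ ∀ z₁ z₂ : EuclideanSpace ℝ (Fin N),
        ‖Matrix.toEuclideanLin W z₁ - Matrix.toEuclideanLin W z₂‖ ≤ δ * ‖z₁ - z₂‖ := by
  intro W
  classical
  rcases Nat.eq_zero_or_pos N with hN0 | hN
  · subst hN0
    refine ⟨⟨?_, ?_⟩, ?_, 0, by norm_num, ?_⟩
    · ext i j; exact i.elim0
    · intro x
      simp [Finsupp.sum, Finset.eq_empty_of_isEmpty x.support]
    · intro μ v hv _
      exact absurd (funext fun i => i.elim0) hv
    · intro z₁ z₂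
      have h1 : ‖Matrix.toEuclideanLin W z₁ - Matrix.toEuclideanLin W z₂‖ = 0 := by
        simp [EuclideanSpace.norm_eq]
      rw [h1, zero_mul]
  -- Now N > 0.
  haveI : NeZero N := ⟨hN.ne'⟩
  haveI : Nonempty (Fin P) := ⟨⟨0, hP⟩⟩
  have hK : 0 < K := by
    rcases Nat.eq_zero_or_pos K with hK0 | hK
    · exfalso; subst hK0; simpa using hb1 ⟨0, hN⟩
    · exact hK
  haveI : Nonempty (Fin K) := ⟨⟨0, hK⟩⟩
  have hPne : (P : ℝ) ≠ 0 := Nat.cast_ne_zero.mpr hP.ne'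
  -- the uniform eigenvalue bound
  set cf : Fin K → ℝ := fun j => Finset.univ.sup' Finset.univ_nonempty ((hC j).1.eigenvalues)
    with hcf
  set c : ℝ := Finset.univ.sup' Finset.univ_nonempty cf with hc
  have heig : ∀ j (i : Fin P), (hC j).1.eigenvalues i < 1 := by
    intro j i
    have hne : (⇑((hC j).1.eigenvectorBasis i) : Fin P → ℝ) ≠ 0 := by
      intro h
      exact ((hC j).1.eigenvectorBasis.orthonormal.ne_zero i)
        (by apply PiLp.ext; exact congrFun h)
    exact hEig j _ _ hne ((hC j).1.mulVec_eigenvectorBasis i)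
  have hc1 : c < 1 := by
    rw [hc, Finset.sup'_lt_iff]
    intro j _
    rw [hcf, Finset.sup'_lt_iff]
    intro i _
    exact heig j i
  have hc0 : 0 ≤ c := by
    refine le_trans ?_ (Finset.le_sup' cf (Finset.mem_univ (⟨0, hK⟩ : Fin K)))
    refine le_trans ((hC ⟨0, hK⟩).eigenvalues_nonneg ⟨0, hP⟩) ?_
    exact Finset.le_sup' _ (Finset.mem_univ _)
  have hCle : ∀ j, (c • (1 : Matrix (Fin P) (Fin P) ℝ) - C j).PosSemidef := by
    intro j
    refine psd_smul_one_sub (hC j).1 fun i => ?_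
    refine le_trans (Finset.le_sup' _ (Finset.mem_univ i)) ?_
    exact Finset.le_sup' cf (Finset.mem_univ j)
  have hCquad : ∀ j (x : Fin P → ℝ), x ⬝ᵥ (C j) *ᵥ x ≤ c * (x ⬝ᵥ x) :=
    fun j x => quad_le_of_psd (hCle j) x
  -- properties of D i
  set D : Fin N → Matrix (Fin P) (Fin P) ℝ := fun i => ∑ j, b j i • C j with hD
  have hDherm : ∀ i, (D i).IsHermitian := by
    intro i
    refine Finset.sum_induction _ Matrix.IsHermitian
      (fun a b ha hb => ha.add hb) Matrix.isHermitian_zero fun j _ => ?_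
    show (b j i • C j)ᴴ = b j i • C j
    rw [Matrix.conjTranspose_smul, (hC j).1.eq, star_trivial]
  have hDpos : ∀ i (x : Fin P → ℝ), 0 ≤ x ⬝ᵥ (D i) *ᵥ x := by
    intro i x
    rw [hD, sum_mulVec', dotProduct_sum']
    refine Finset.sum_nonneg fun j _ => ?_
    rw [Matrix.smul_mulVec, dotProduct_smul, smul_eq_mul]
    have := (hC j).dotProduct_mulVec_nonneg x
    rw [star_trivial] at this
    exact mul_nonneg (hb j i) this
  have hDquad : ∀ i (x : Fin P → ℝ), x ⬝ᵥ (D i) *ᵥ x ≤ c * (x ⬝ᵥ x) := by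
    intro i x
    rw [hD, sum_mulVec', dotProduct_sum']
    calc ∑ j, x ⬝ᵥ (b j i • C j) *ᵥ x
        ≤ ∑ j : Fin K, b j i * (c * (x ⬝ᵥ x)) := by
          refine Finset.sum_le_sum fun j _ => ?_
          rw [Matrix.smul_mulVec, dotProduct_smul, smul_eq_mul]
          exact mul_le_mul_of_nonneg_left (hCquad j x) (hb j i)
      _ = c * (x ⬝ᵥ x) := by rw [← Finset.sum_mul, hb1 i, one_mul]
  -- patch matrix facts
  have hPv : ∀ (i : Fin N) (v : Fin N → ℝ) (j : Fin P),
      (patchMatrix P N i *ᵥ v) j = v ⟨(i.1 + j.1) % N, Nat.mod_lt _ hN⟩ := by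
    intro i v j
    show (∑ k, (if k.1 = (i.1 + j.1) % N then (1:ℝ) else 0) * v k) = _
    rw [Finset.sum_eq_single (⟨(i.1 + j.1) % N, Nat.mod_lt _ hN⟩ : Fin N)]
    · simp
    · intro k _ hk
      rw [if_neg fun h => hk (Fin.ext h), zero_mul]
    · intro h; exact absurd (Finset.mem_univ _) h
  have hsum : ∀ v : Fin N → ℝ,
      ∑ i, (patchMatrix P N i *ᵥ v) ⬝ᵥ (patchMatrix P N i *ᵥ v) = (P : ℝ) * (v ⬝ᵥ v) := by
    intro v
    have h1 : ∀ i : Fin N, (patchMatrix P N i *ᵥ v) ⬝ᵥ (patchMatrix P N i *ᵥ v) =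
        ∑ j : Fin P, v ⟨(i.1 + j.1) % N, Nat.mod_lt _ hN⟩ *
          v ⟨(i.1 + j.1) % N, Nat.mod_lt _ hN⟩ := by
      intro i
      simp only [dotProduct, hPv]
    rw [Finset.sum_congr rfl fun i _ => h1 i, Finset.sum_comm]
    have h2 : ∀ j : Fin P, (∑ i : Fin N, v ⟨(i.1 + j.1) % N, Nat.mod_lt _ hN⟩ *
        v ⟨(i.1 + j.1) % N, Nat.mod_lt _ hN⟩) = v ⬝ᵥ v := by
      intro j
      set m : Fin N := ⟨j.1 % N, Nat.mod_lt _ hN⟩ with hm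
      refine Fintype.sum_equiv (Equiv.addRight m) _ (fun k => v k * v k) fun i => ?_
      have : (⟨(i.1 + j.1) % N, Nat.mod_lt _ hN⟩ : Fin N) = i + m := by
        apply Fin.ext
        show (i.1 + j.1) % N = (i.1 + j.1 % N) % N
        rw [Nat.add_mod_mod]
      rw [this]
      simp [Equiv.coe_addRight]
    rw [Finset.sum_congr rfl fun j _ => h2 j, Finset.sum_const]
    simp [mul_comm]
  -- conjugation identity
  have hconj : ∀ (A : Matrix (Fin P) (Fin N) ℝ) (M : Matrix (Fin P) (Fin P) ℝ) (v : Fin N → ℝ),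
      v ⬝ᵥ (Aᵀ * M * A) *ᵥ v = (A *ᵥ v) ⬝ᵥ M *ᵥ (A *ᵥ v) := by
    intro A M v
    rw [← Matrix.mulVec_mulVec, ← Matrix.mulVec_mulVec, Matrix.dotProduct_mulVec,
      Matrix.vecMul_transpose]
  -- quadratic form of W
  have hWv : ∀ v : Fin N → ℝ, v ⬝ᵥ W *ᵥ v =
      (P : ℝ)⁻¹ * ∑ i, (patchMatrix P N i *ᵥ v) ⬝ᵥ (D i) *ᵥ (patchMatrix P N i *ᵥ v) := by
    intro v
    show v ⬝ᵥ ((P : ℝ)⁻¹ • ∑ i, (patchMatrix P N i)ᵀ * D i * patchMatrix P N i) *ᵥ v = _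
    rw [Matrix.smul_mulVec, dotProduct_smul, smul_eq_mul, sum_mulVec',
      dotProduct_sum']
    congr 1
    exact Finset.sum_congr rfl fun i _ => hconj _ _ v
  have hWpos : ∀ v : Fin N → ℝ, 0 ≤ v ⬝ᵥ W *ᵥ v := by
    intro v
    rw [hWv]
    exact mul_nonneg (inv_nonneg.mpr (Nat.cast_nonneg P))
      (Finset.sum_nonneg fun i _ => hDpos i _)
  have hWquad : ∀ v : Fin N → ℝ, v ⬝ᵥ W *ᵥ v ≤ c * (v ⬝ᵥ v) := by
    intro v
    rw [hWv]
    have h1 : ∑ i, (patchMatrix P N i *ᵥ v) ⬝ᵥ (D i) *ᵥ (patchMatrix P N i *ᵥ v) ≤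
        c * ((P : ℝ) * (v ⬝ᵥ v)) := by
      calc ∑ i, (patchMatrix P N i *ᵥ v) ⬝ᵥ (D i) *ᵥ (patchMatrix P N i *ᵥ v)
          ≤ ∑ i, c * ((patchMatrix P N i *ᵥ v) ⬝ᵥ (patchMatrix P N i *ᵥ v)) :=
            Finset.sum_le_sum fun i _ => hDquad i _
        _ = c * ((P : ℝ) * (v ⬝ᵥ v)) := by rw [← Finset.mul_sum, hsum]
    calc (P : ℝ)⁻¹ * ∑ i, (patchMatrix P N i *ᵥ v) ⬝ᵥ (D i) *ᵥ (patchMatrix P N i *ᵥ v)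
        ≤ (P : ℝ)⁻¹ * (c * ((P : ℝ) * (v ⬝ᵥ v))) :=
          mul_le_mul_of_nonneg_left h1 (inv_nonneg.mpr (Nat.cast_nonneg P))
      _ = c * (v ⬝ᵥ v) := by field_simp
  -- hermitian
  have hWherm : W.IsHermitian := by
    have hS : (∑ i, (patchMatrix P N i)ᵀ * D i * patchMatrix P N i).IsHermitian := by
      refine Finset.sum_induction _ Matrix.IsHermitian
        (fun a b ha hb => ha.add hb) Matrix.isHermitian_zero fun i _ => ?_
      rw [← Matrix.conjTranspose_eq_transpose_of_trivial]
      exact Matrix.isHermitian_conjTranspose_mul_mul _ (hDherm i)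
    show Wᴴ = W
    show ((P : ℝ)⁻¹ • ∑ i, (patchMatrix P N i)ᵀ * D i * patchMatrix P N i)ᴴ = W
    rw [Matrix.conjTranspose_smul, hS.eq, star_trivial]
  have hWpsd : W.PosSemidef := Matrix.PosSemidef.of_dotProduct_mulVec_nonneg hWherm (fun x => by
    rw [star_trivial]; exact hWpos x)
  refine ⟨hWpsd, ?_, c, hc1, ?_⟩
  · -- eigenvalues < 1
    intro μ v hv hWveq
    have h1 : v ⬝ᵥ W *ᵥ v = μ * (v ⬝ᵥ v) := by
      rw [hWveq, dotProduct_smul, smul_eq_mul]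
    have h3 : 0 < v ⬝ᵥ v := by
      rcases lt_or_eq_of_le (Finset.sum_nonneg fun i _ => mul_self_nonneg (v i) :
        (0:ℝ) ≤ v ⬝ᵥ v) with h | h
      · exact h
      · exact absurd (dotProduct_self_eq_zero.mp h.symm) hv
    have h4 : μ * (v ⬝ᵥ v) ≤ c * (v ⬝ᵥ v) := by rw [← h1]; exact hWquad v
    exact lt_of_le_of_lt (le_of_mul_le_mul_right h4 h3) hc1
  · -- contraction
    have hc1psd : (c • (1 : Matrix (Fin N) (Fin N) ℝ) - W).PosSemidef :=
      Matrix.PosSemidef.of_dotProduct_mulVec_nonneg (by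
        show (c • (1:Matrix (Fin N) (Fin N) ℝ) - W)ᴴ = _
        rw [Matrix.conjTranspose_sub, Matrix.conjTranspose_smul, Matrix.conjTranspose_one,
          hWherm.eq, star_trivial])
       (fun x => by
        rw [star_trivial, Matrix.sub_mulVec, Matrix.smul_mulVec, Matrix.one_mulVec,
          dotProduct_sub, dotProduct_smul, smul_eq_mul, sub_nonneg]
        exact hWquad x)
    set S : Matrix (Fin N) (Fin N) ℝ := open MatrixOrder in CFC.sqrt W with hSdef
    have hSS : S * S = W := open MatrixOrder in CFC.sqrt_mul_sqrt_self W hWpsd.nonneg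
    have hSherm : S.IsHermitian := open MatrixOrder in (CFC.sqrt_nonneg W).posSemidef.1
    have hST : Sᵀ = S := by
      rw [← Matrix.conjTranspose_eq_transpose_of_trivial, hSherm.eq]
    have hvm : ∀ y : Fin N → ℝ, y ᵥ* S = S *ᵥ y := by
      intro y
      conv_lhs => rw [← hST]
      rw [Matrix.vecMul_transpose]
    have hSveq : ∀ x : Fin N → ℝ, (S *ᵥ x) ⬝ᵥ (S *ᵥ x) = x ⬝ᵥ W *ᵥ x := by
      intro x
      rw [Matrix.dotProduct_mulVec, hvm, Matrix.mulVec_mulVec, hSS, dotProduct_comm]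
    have hW2 : ∀ x : Fin N → ℝ, (W *ᵥ x) ⬝ᵥ (W *ᵥ x) ≤ c ^ 2 * (x ⬝ᵥ x) := by
      intro x
      have e1 : W *ᵥ x = S *ᵥ (S *ᵥ x) := by rw [Matrix.mulVec_mulVec, hSS]
      calc (W *ᵥ x) ⬝ᵥ (W *ᵥ x) = (S *ᵥ x) ⬝ᵥ W *ᵥ (S *ᵥ x) := by
            rw [e1, hSveq (S *ᵥ x)]
        _ ≤ c * ((S *ᵥ x) ⬝ᵥ (S *ᵥ x)) := hWquad _
        _ = c * (x ⬝ᵥ W *ᵥ x) := by rw [hSveq]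
        _ ≤ c * (c * (x ⬝ᵥ x)) := mul_le_mul_of_nonneg_left (hWquad x) hc0
        _ = c ^ 2 * (x ⬝ᵥ x) := by ring
    have hnorm : ∀ y : EuclideanSpace ℝ (Fin N),
        ‖y‖ = Real.sqrt ((fun i => y i) ⬝ᵥ (fun i => y i)) := by
      intro y
      rw [EuclideanSpace.norm_eq]
      congr 1
      exact Finset.sum_congr rfl fun i _ => by rw [Real.norm_eq_abs, sq_abs, sq]
    have key : ∀ z : EuclideanSpace ℝ (Fin N), ‖Matrix.toEuclideanLin W z‖ ≤ c * ‖z‖ := by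
      intro z
      rw [hnorm (Matrix.toEuclideanLin W z), hnorm z]
      have hTz : (fun i => (Matrix.toEuclideanLin W z) i) = W *ᵥ (fun i => z i) := rfl
      rw [hTz]
      calc Real.sqrt ((W *ᵥ fun i => z i) ⬝ᵥ (W *ᵥ fun i => z i))
          ≤ Real.sqrt (c ^ 2 * ((fun i => z i) ⬝ᵥ (fun i => z i))) :=
            Real.sqrt_le_sqrt (hW2 _)
        _ = c * Real.sqrt ((fun i => z i) ⬝ᵥ (fun i => z i)) := by
            rw [Real.sqrt_mul (sq_nonneg c), Real.sqrt_sq hc0]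
    intro z₁ z₂
    rw [← map_sub]
    exact key _
end
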